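/- Let $\Gamma$ be an odd minimal edge cutset in $\mathbb{Z}^d$, $\delta \in \{0,1\}$, and let $v \in E_\delta(\Gamma)$ (a vertex of $A_\delta$ incident to an edge of $\Gamma$). Define $U_1(v)$ as the set of vertices $v' \in E_\delta(\Gamma)$ such that there is $u \in A_\delta$ adjacent to both $v$ and $v'$. Then $|U_1(v)| \geq P_\Gamma(v)\,(2d - P_\Gamma(v)) - \min\{P_\Gamma(v), 2d - P_\Gamma(v)\}$. -/

import Mathlib

/-- Nearest-neighbor adjacency in `ℤ^d`. -/
def latAdj (d : ℕ) (v w : Fin d → ℤ) : Prop := ∑ i, |v i - w i| = 1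

def uvec (d : ℕ) (p : Fin d × Bool) : Fin d → ℤ :=
  fun i => if i = p.1 then (if p.2 then 1 else -1) else 0

lemma uvec_apply_self (d : ℕ) (p : Fin d × Bool) :
    uvec d p p.1 = if p.2 then 1 else -1 := by simp [uvec]

lemma uvec_apply_ne (d : ℕ) (p : Fin d × Bool) {i : Fin d} (h : i ≠ p.1) :
    uvec d p i = 0 := by simp [uvec, h]

lemma sign_inj {b b' : Bool} (h : (if b then (1:ℤ) else -1) = (if b' then 1 else -1)) :
    b = b' := by cases b <;> cases b' <;> simp_all

lemma uvec_inj (d : ℕ) : Function.Injective (uvec d) := by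
  rintro ⟨k, b⟩ ⟨k', b'⟩ h
  have h1 := congrFun h k
  by_cases hk : k = k'
  · subst hk
    rw [uvec_apply_self, uvec_apply_self] at h1
    have hb : b = b' := sign_inj h1
    rw [hb]
  · simp only [uvec, if_pos rfl, if_neg hk] at h1
    cases b <;> simp_all

lemma uvec_abs_sum (d : ℕ) (p : Fin d × Bool) : ∑ i, |uvec d p i| = 1 := by
  rw [Finset.sum_eq_single p.1]
  · rw [uvec_apply_self]; cases p.2 <;> simp
  · intro i _ hi; rw [uvec_apply_ne d p hi, abs_zero]
  · simp

lemma uvec_sum (d : ℕ) (p : Fin d × Bool) : ∑ i, uvec d p i = if p.2 then 1 else -1 := by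
  rw [Finset.sum_eq_single p.1]
  · exact uvec_apply_self d p
  · intro i _ hi; exact uvec_apply_ne d p hi
  · simp

lemma latAdj_add_uvec (d : ℕ) (v : Fin d → ℤ) (p : Fin d × Bool) :
    latAdj d v (v + uvec d p) := by
  unfold latAdj
  simp only [Pi.add_apply]
  have : ∀ i, |v i - (v i + uvec d p i)| = |uvec d p i| := by
    intro i; rw [← abs_neg]; ring_nf
  rw [Finset.sum_congr rfl fun i _ => this i]
  exact uvec_abs_sum d p

lemma latAdj_comm (d : ℕ) (v w : Fin d → ℤ) (h : latAdj d v w) : latAdj d w v := by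
  unfold latAdj at *
  rw [Finset.sum_congr rfl fun i _ => abs_sub_comm (w i) (v i)]
  exact h

lemma latAdj_iff (d : ℕ) (v w : Fin d → ℤ) :
    latAdj d v w ↔ ∃ p, w = v + uvec d p := by
  constructor
  · intro h
    unfold latAdj at h
    have h' : ∑ i, ((v i - w i).natAbs) = 1 := by
      have : ((∑ i, ((v i - w i).natAbs) : ℕ) : ℤ) = 1 := by
        push_cast [← Int.abs_eq_natAbs]; exact h
      exact_mod_cast this
    obtain ⟨k, -, hk⟩ : ∃ k ∈ Finset.univ, (v k - w k).natAbs ≠ 0 := by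
      by_contra hc
      push_neg at hc
      rw [Finset.sum_eq_zero (fun i hi => hc i hi)] at h'
      exact one_ne_zero h'.symm
    have hsplit : (v k - w k).natAbs + ∑ i ∈ Finset.univ.erase k, (v i - w i).natAbs = 1 := by
      rw [Finset.add_sum_erase Finset.univ (fun i => (v i - w i).natAbs) (Finset.mem_univ k)]
      exact h'
    have hrest : ∀ j, j ≠ k → (v j - w j).natAbs = 0 := by
      intro j hj
      have h1 : ∑ i ∈ Finset.univ.erase k, (v i - w i).natAbs = 0 := by omega
      exact (Finset.sum_eq_zero_iff.mp h1) j (Finset.mem_erase.mpr ⟨hj, Finset.mem_univ j⟩)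
    have hk1 : (v k - w k).natAbs = 1 := by omega
    refine ⟨(k, decide (w k - v k = 1)), funext fun i => ?_⟩
    by_cases hi : i = k
    · subst hi
      have := Int.natAbs_eq_iff.mp hk1
      rcases this with h1 | h1
      · have : w i - v i = -1 := by omega
        simp [uvec, this]
        omega
      · have : w i - v i = 1 := by omega
        simp [uvec, this]
        omega
    · have := hrest i hi
      have : v i = w i := by omega
      simp [uvec, hi, this]
  · rintro ⟨p, rfl⟩
    exact latAdj_add_uvec d v p

lemma latAdj_parity (d : ℕ) (v w : Fin d → ℤ) (h : latAdj d v w) :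
    (Odd (∑ i, w i) ↔ ¬ Odd (∑ i, v i)) := by
  obtain ⟨p, rfl⟩ := (latAdj_iff d v w).mp h
  have : ∑ i, (v + uvec d p) i = ∑ i, v i + (if p.2 then 1 else -1) := by
    simp only [Pi.add_apply, Finset.sum_add_distrib, uvec_sum]
  rw [this, Int.odd_iff, Int.odd_iff]
  cases p.2 <;> simp <;> omega

lemma signv_ne_zero (b : Bool) : (if b then (1:ℤ) else -1) ≠ 0 := by cases b <;> simp

lemma uvec_pair_eq (d : ℕ) {p q p' q' : Fin d × Bool}
    (hpq : p.1 ≠ q.1) (hpq' : p'.1 ≠ q'.1)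
    (h : uvec d p + uvec d q = uvec d p' + uvec d q') :
    (p = p' ∧ q = q') ∨ (p = q' ∧ q = p') := by
  have hp1 := congrFun h p.1
  simp only [Pi.add_apply, uvec_apply_self, uvec_apply_ne d q hpq] at hp1
  by_cases hpp : p'.1 = p.1
  · left
    have hq'p : p.1 ≠ q'.1 := fun hh => hpq' (hpp.trans hh)
    rw [uvec_apply_ne d q' hq'p, add_zero, add_zero] at hp1
    have : uvec d p' p.1 = if p'.2 then 1 else -1 := by
      rw [← hpp, uvec_apply_self]
    rw [this] at hp1
    have hp : p = p' := Prod.ext hpp.symm (sign_inj hp1)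
    refine ⟨hp, uvec_inj d ?_⟩
    rw [hp] at h
    exact add_left_cancel h
  · right
    rw [uvec_apply_ne d p' (Ne.symm hpp), add_zero, zero_add] at hp1
    by_cases hq'p : q'.1 = p.1
    · have : uvec d q' p.1 = if q'.2 then 1 else -1 := by rw [← hq'p, uvec_apply_self]
      rw [this] at hp1
      have hp : p = q' := Prod.ext hq'p.symm (sign_inj hp1)
      refine ⟨hp, uvec_inj d ?_⟩
      rw [hp, add_comm (uvec d q')] at h
      exact add_right_cancel h
    · rw [uvec_apply_ne d q' (fun hh => hq'p hh.symm)] at hp1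
      exact absurd hp1 (signv_ne_zero p.2)

/-- for an odd cutset with sides `A₁`, `A₀ = A₁ᶜ`, and a vertex
`v ∈ E_δ` (i.e. `v ∈ A_δ` incident to a crossing edge, `P_Γ(v) > 0`), the set
`U₁(v)` of vertices `v' ∈ E_δ` having a common neighbor with `v` inside `A_δ`
satisfies `|U₁(v)| ≥ P_Γ(v)(2d - P_Γ(v)) - min{P_Γ(v), 2d - P_Γ(v)}`. -/
theorem U1_size_lower_bound (d : ℕ) (hd : 1 ≤ d) (A₁ : Set (Fin d → ℤ))
    (hodd : ∀ v ∈ A₁, (∃ w, latAdj d v w ∧ w ∉ A₁) → Odd (∑ i, v i))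
    (S : Set (Fin d → ℤ)) (hS : S = A₁ ∨ S = A₁ᶜ)
    (v : Fin d → ℤ) (hv : v ∈ S)
    (hP : 0 < {w | latAdj d v w ∧ w ∉ S}.ncard) :
    {w | latAdj d v w ∧ w ∉ S}.ncard * (2 * d - {w | latAdj d v w ∧ w ∉ S}.ncard)
        - min {w | latAdj d v w ∧ w ∉ S}.ncard
            (2 * d - {w | latAdj d v w ∧ w ∉ S}.ncard)
      ≤ {v' | v' ∈ S ∧ (∃ w, latAdj d v' w ∧ w ∉ S) ∧
          ∃ u ∈ S, latAdj d v u ∧ latAdj d v' u}.ncard := by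
  classical
  set Tgt := {v' | v' ∈ S ∧ (∃ w, latAdj d v' w ∧ w ∉ S) ∧
      ∃ u ∈ S, latAdj d v u ∧ latAdj d v' u} with hTgt
  set C : Finset (Fin d × Bool) := Finset.univ.filter (fun p => v + uvec d p ∉ S) with hC
  set B : Finset (Fin d × Bool) := Finset.univ.filter (fun p => v + uvec d p ∈ S) with hB
  have hvinj : Function.Injective (fun p => v + uvec d p) := by
    intro p q h
    exact uvec_inj d (add_left_cancel h)
  have him : {w | latAdj d v w ∧ w ∉ S} = ↑(C.image (fun p => v + uvec d p)) := by
    ext w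
    simp only [Set.mem_setOf_eq, Finset.coe_image, Set.mem_image, Finset.mem_coe,
      Finset.mem_filter, Finset.mem_univ, true_and, latAdj_iff, hC]
    constructor
    · rintro ⟨⟨p, rfl⟩, hw⟩; exact ⟨p, hw, rfl⟩
    · rintro ⟨p, hp, rfl⟩; exact ⟨⟨p, rfl⟩, hp⟩
  have hcardC : {w | latAdj d v w ∧ w ∉ S}.ncard = C.card := by
    rw [him, Set.ncard_coe_finset, Finset.card_image_of_injective _ hvinj]
  have hBC : B.card + C.card = 2 * d := by
    have h1 := Finset.card_filter_add_card_filter_not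
      (s := (Finset.univ : Finset (Fin d × Bool))) (p := fun p => v + uvec d p ∈ S)
    have h2 : (Finset.univ : Finset (Fin d × Bool)).card = 2 * d := by
      simp [Finset.card_univ, mul_comm]
    rw [h2] at h1
    rw [hB, hC]
    convert h1 using 3
  obtain ⟨w₀, hw₀adj, hw₀S⟩ : ∃ w, latAdj d v w ∧ w ∉ S := by
    obtain ⟨w, hw⟩ := Set.nonempty_of_ncard_ne_zero hP.ne'
    exact ⟨w, hw⟩
  have hvpar : (S = A₁ ∧ Odd (∑ i, v i)) ∨ (S = A₁ᶜ ∧ ¬ Odd (∑ i, v i)) := by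
    rcases hS with rfl | rfl
    · exact Or.inl ⟨rfl, hodd v hv ⟨w₀, hw₀adj, hw₀S⟩⟩
    · refine Or.inr ⟨rfl, ?_⟩
      have hw₀A : w₀ ∈ A₁ := by simpa using hw₀S
      have hwodd : Odd (∑ i, w₀ i) := hodd w₀ hw₀A ⟨v, latAdj_comm d v w₀ hw₀adj, hv⟩
      have hpar := latAdj_parity d v w₀ hw₀adj
      tauto
  have hint : ∀ p ∈ B, ∀ u, latAdj d (v + uvec d p) u → u ∈ S := by
    intro p hpB u hu
    have hxS : v + uvec d p ∈ S := by
      rw [hB] at hpB; simpa using hpB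
    have hpar1 := latAdj_parity d v _ (latAdj_add_uvec d v p)
    by_contra huS
    rcases hvpar with ⟨hSA, hvo⟩ | ⟨hSA, hve⟩
    · have hx : Odd (∑ i, (v + uvec d p) i) :=
        hodd _ (hSA ▸ hxS) ⟨u, hu, hSA ▸ huS⟩
      tauto
    · have huA : u ∈ A₁ := by
        rw [hSA] at huS; simpa using huS
      have hxnA : v + uvec d p ∉ A₁ := by
        rw [hSA] at hxS; exact hxS
      have huodd : Odd (∑ i, u i) :=
        hodd u huA ⟨v + uvec d p, latAdj_comm _ _ _ hu, hxnA⟩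
      have hpar2 := latAdj_parity d _ u hu
      tauto
  have hdisj : ∀ p, p ∈ B → p ∈ C → False := by
    intro p hpB hpC
    rw [hB] at hpB; rw [hC] at hpC
    simp at hpB hpC
    exact hpC hpB
  set T : Finset ((Fin d × Bool) × (Fin d × Bool)) :=
    (B ×ˢ C).filter (fun pq => pq.2 ≠ (pq.1.1, !pq.1.2)) with hT
  set G : (Fin d × Bool) × (Fin d × Bool) → (Fin d → ℤ) :=
    fun pq => v + uvec d pq.1 + uvec d pq.2 with hG
  have hTcard : B.card * C.card - min C.card B.card ≤ T.card := by
    have hsplit := Finset.card_filter_add_card_filter_not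
      (s := B ×ˢ C) (p := fun pq => pq.2 ≠ (pq.1.1, !pq.1.2))
    have hprod : (B ×ˢ C).card = B.card * C.card := Finset.card_product B C
    have hD1 : ((B ×ˢ C).filter (fun pq => ¬ pq.2 ≠ (pq.1.1, !pq.1.2))).card ≤ C.card := by
      apply Finset.card_le_card_of_injOn Prod.snd
      · intro pq hpq
        simp only [Finset.mem_coe, Finset.mem_filter, Finset.mem_product] at hpq
        exact hpq.1.2
      · intro x hx y hy hxy
        simp only [Finset.mem_coe, Finset.mem_filter, Finset.mem_product, not_not] at hx hy
        have heq : ((x.1.1, !x.1.2) : Fin d × Bool) = (y.1.1, !y.1.2) := by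
          rw [← hx.2, ← hy.2, hxy]
        injection heq with h1 h2
        exact Prod.ext (Prod.ext h1 (Bool.not_inj h2)) hxy
    have hD2 : ((B ×ˢ C).filter (fun pq => ¬ pq.2 ≠ (pq.1.1, !pq.1.2))).card ≤ B.card := by
      apply Finset.card_le_card_of_injOn Prod.fst
      · intro pq hpq
        simp only [Finset.mem_coe, Finset.mem_filter, Finset.mem_product] at hpq
        exact hpq.1.1
      · intro x hx y hy hxy
        simp only [Finset.mem_coe, Finset.mem_filter, Finset.mem_product, not_not] at hx hy
        have h2 : x.2 = y.2 := by rw [hx.2, hy.2, hxy]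
        exact Prod.ext hxy h2
    rw [← hT] at hsplit
    omega
  have hne1 : ∀ pq ∈ T, pq.1.1 ≠ pq.2.1 := by
    intro pq hpq h
    rw [hT] at hpq
    simp only [Finset.mem_filter, Finset.mem_product] at hpq
    obtain ⟨⟨hB', hC'⟩, hne⟩ := hpq
    by_cases hb : pq.2.2 = pq.1.2
    · have : pq.1 = pq.2 := Prod.ext h hb.symm
      exact hdisj pq.1 hB' (this ▸ hC')
    · refine hne (Prod.ext h.symm ?_)
      revert hb
      cases pq.1.2 <;> cases pq.2.2 <;> simp
  have hGinj : Set.InjOn G ↑T := by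
    intro x hx y hy hxy
    have hsum : uvec d x.1 + uvec d x.2 = uvec d y.1 + uvec d y.2 := by
      have : v + (uvec d x.1 + uvec d x.2) = v + (uvec d y.1 + uvec d y.2) := by
        rw [hG] at hxy
        simpa [add_assoc] using hxy
      exact add_left_cancel this
    have hxT : x ∈ T := Finset.mem_coe.mp hx
    have hyT : y ∈ T := Finset.mem_coe.mp hy
    rcases uvec_pair_eq d (hne1 x hxT) (hne1 y hyT) hsum with ⟨h1, h2⟩ | ⟨h1, h2⟩
    · exact Prod.ext h1 h2
    · exfalso
      rw [hT] at hxT hyT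
      simp only [Finset.mem_filter, Finset.mem_product] at hxT hyT
      exact hdisj x.1 hxT.1.1 (h1 ▸ hyT.1.2)
  have hsub : ↑(T.image G) ⊆ Tgt := by
    intro x hx
    simp only [Finset.coe_image, Set.mem_image, Finset.mem_coe] at hx
    obtain ⟨pq, hpq, rfl⟩ := hx
    rw [hT] at hpq
    simp only [Finset.mem_filter, Finset.mem_product] at hpq
    obtain ⟨⟨hB', hC'⟩, hne⟩ := hpq
    have hu : v + uvec d pq.1 ∈ S := by rw [hB] at hB'; simpa using hB'
    have hw2 : v + uvec d pq.2 ∉ S := by rw [hC] at hC'; simpa using hC'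
    have hadj1 : latAdj d (v + uvec d pq.1) (G pq) := latAdj_add_uvec d _ pq.2
    refine ⟨hint pq.1 hB' _ hadj1, ⟨v + uvec d pq.2, ?_, hw2⟩,
      v + uvec d pq.1, hu, latAdj_add_uvec d v pq.1, latAdj_comm _ _ _ hadj1⟩
    have hGeq : G pq = (v + uvec d pq.2) + uvec d pq.1 := by
      rw [hG]; dsimp only; rw [add_right_comm]
    rw [hGeq]
    exact latAdj_comm _ _ _ (latAdj_add_uvec d _ pq.1)
  have hfin : Tgt.Finite := by
    apply Set.Finite.subset (Set.finite_range G)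
    rintro x ⟨-, -, u, -, huv, hxu⟩
    obtain ⟨p, rfl⟩ := (latAdj_iff d v u).mp huv
    obtain ⟨q, rfl⟩ := (latAdj_iff d _ x).mp (latAdj_comm _ _ _ hxu)
    exact ⟨(p, q), rfl⟩
  have hle : T.card ≤ Tgt.ncard := by
    calc T.card = (T.image G).card := (Finset.card_image_of_injOn hGinj).symm
      _ = (↑(T.image G) : Set (Fin d → ℤ)).ncard := (Set.ncard_coe_finset _).symm
      _ ≤ Tgt.ncard := Set.ncard_le_ncard hsub hfin
  rw [hcardC]
  have h2d : 2 * d - C.card = B.card := by omega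
  rw [h2d]
  calc C.card * B.card - min C.card B.card
      = B.card * C.card - min C.card B.card := by rw [mul_comm]
    _ ≤ T.card := hTcard
    _ ≤ Tgt.ncard := hle
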